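/- Let d = 1, A = 1, ε > 1 and b(x,μ) = −x + εB(μ), where B(μ) = ∫x μ(dx). Let (μ_t)_{t≥0} be Borel probability measures on ℝ with finite first moments solving the Cauchy problem ∂_tμ_t = L_{μ_t}^*μ_t with initial condition ν, and suppose B(μ_t) = B(ν)e^{(ε−1)t} for all t ≥ 0, with B(ν) ≠ 0. Then (μ_t) does not converge weakly (in the topology of weak convergence of probability measures) to any Borel probability measure on ℝ as t → +∞; in particular, it does not converge weakly to the standard Gaussian measure, which is the stationary solution. -/

import Mathlib

open MeasureTheory Real Set Filter
open scoped Topology NNReal ENNReal BoundedContinuousFunction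

noncomputable section

/-- The one-dimensional Kolmogorov operator `L φ = φ'' + b φ'`. -/
def L1op (bb : ℝ → ℝ) (φ : ℝ → ℝ) (x : ℝ) : ℝ :=
  deriv (deriv φ) x + bb x * deriv φ x

/-- The mean `B(μ) = ∫ x μ(dx)`. -/
def Bmean (μ : Measure ℝ) : ℝ := ∫ x, x ∂μ

/-- `C_0^∞` test functions on ℝ. -/
def IsTestFun1 (φ : ℝ → ℝ) : Prop :=
  ContDiff ℝ (⊤ : ℕ∞) φ ∧ HasCompactSupport φ

/-- Key measurability lemma: for ANY function `f`, the map
`t ↦ ∫ s in Ioc 0 t, f s` is measurable. -/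
lemma measurable_setIntegral_Ioc (f : ℝ → ℝ) :
    Measurable (fun t : ℝ => ∫ s in Ioc (0:ℝ) t, f s) := by
  set A : Set ℝ := {t | IntegrableOn f (Ioc (0:ℝ) t) volume} with hA
  have hAoc : ∀ ⦃t t' : ℝ⦄, t ∈ A → t' ≤ t → t' ∈ A := by
    intro t t' ht h
    exact ht.mono_set (Set.Ioc_subset_Ioc le_rfl h)
  have hAmeas : MeasurableSet A := by
    have : OrdConnected A := ⟨fun x hx y hy z hz => hAoc hy hz.2⟩
    exact this.measurableSet
  set Lp : ℝ → ℝ≥0∞ := fun t => ∫⁻ s in Ioc (0:ℝ) t, ENNReal.ofReal (f s) with hLp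
  set Ln : ℝ → ℝ≥0∞ := fun t => ∫⁻ s in Ioc (0:ℝ) t, ENNReal.ofReal (-f s) with hLn
  have hLpm : Monotone Lp := fun a b hab =>
    lintegral_mono_set (Set.Ioc_subset_Ioc le_rfl hab)
  have hLnm : Monotone Ln := fun a b hab =>
    lintegral_mono_set (Set.Ioc_subset_Ioc le_rfl hab)
  have h1 : Measurable fun t => (Lp t).toReal - (Ln t).toReal :=
    ((ENNReal.measurable_toReal.comp hLpm.measurable).sub
      (ENNReal.measurable_toReal.comp hLnm.measurable))
  have heq : (fun t : ℝ => ∫ s in Ioc (0:ℝ) t, f s)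
      = A.indicator (fun t => (Lp t).toReal - (Ln t).toReal) := by
    funext t
    by_cases ht : t ∈ A
    · rw [Set.indicator_of_mem ht]
      exact integral_eq_lintegral_pos_part_sub_lintegral_neg_part ht
    · rw [Set.indicator_of_notMem ht]
      exact integral_undef ht
  rw [heq]
  exact h1.indicator hAmeas

lemma testFun_bound {ψ : ℝ → ℝ} (hc : Continuous ψ) (hs : HasCompactSupport ψ) :
    ∃ C, 0 ≤ C ∧ ∀ x, ‖ψ x‖ ≤ C := by
  obtain ⟨C, hC⟩ := hs.exists_bound_of_continuous hc
  exact ⟨max C 0, le_max_right _ _, fun x => (hC x).trans (le_max_left _ _)⟩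

lemma testFun_deriv {φ : ℝ → ℝ} (h : IsTestFun1 φ) : IsTestFun1 (deriv φ) :=
  ⟨(contDiff_infty_iff_deriv.mp h.1).2, h.2.deriv⟩

lemma testFun_psi1 {φ : ℝ → ℝ} (h : IsTestFun1 φ) :
    IsTestFun1 (fun x => deriv (deriv φ) x - x * deriv φ x) := by
  have h1 := testFun_deriv h
  have h2 := testFun_deriv h1
  refine ⟨h2.1.sub (contDiff_id.mul h1.1), ?_⟩
  have : (fun x : ℝ => deriv (deriv φ) x - x * deriv φ x)
      = (fun x : ℝ => deriv (deriv φ) x + -(x * deriv φ x)) := by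
    funext x; ring
  rw [this]
  exact h2.2.add (HasCompactSupport.neg h1.2.mul_left)

lemma testFun_translate {φ : ℝ → ℝ} (h : IsTestFun1 φ) (y : ℝ) :
    IsTestFun1 (fun x => φ (x - y)) :=
  ⟨h.1.comp (contDiff_id.sub contDiff_const),
    h.2.comp_homeomorph (Homeomorph.subRight y)⟩

/-- **Non-convergence for `ε > 1`**: if the mean of the solution blows up as
`B(ν)e^{(ε-1)t}` with `B(ν) ≠ 0`, then the solution of the mean-field
Ornstein–Uhlenbeck Cauchy problem does not converge weakly to any probability
measure (in particular, not to the standard Gaussian stationary solution). -/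
theorem stmt14_no_weak_convergence
    (ε : ℝ) (hε : 1 < ε)
    (ν : Measure ℝ) (hν : IsProbabilityMeasure ν)
    (μt : ℝ → Measure ℝ)
    (hμt0 : μt 0 = ν)
    (hμtProb : ∀ t, 0 ≤ t → IsProbabilityMeasure (μt t))
    (hμtInt : ∀ t, 0 ≤ t → Integrable (fun x => x) (μt t))
    (hμtSol : ∀ φ : ℝ → ℝ, IsTestFun1 φ → ∀ t : ℝ, 0 ≤ t →
      ∫ x, φ x ∂(μt t) - ∫ x, φ x ∂ν
        = ∫ s in (0:ℝ)..t,
            ∫ x, L1op (fun y => -y + ε * Bmean (μt s)) φ x ∂(μt s))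
    (hBexp : ∀ t : ℝ, 0 ≤ t → Bmean (μt t) = Bmean ν * Real.exp ((ε - 1) * t))
    (hBν : Bmean ν ≠ 0) :
    ¬ ∃ muLim : Measure ℝ, IsProbabilityMeasure muLim ∧
        ∀ f : ℝ →ᵇ ℝ,
          Tendsto (fun t => ∫ x, f x ∂(μt t)) atTop (nhds (∫ x, f x ∂muLim)) := by
  rintro ⟨muLim, hPL, hconv⟩
  haveI := hPL
  have hεpos : (0:ℝ) < ε := by linarith
  -- measurable representation of test-function means
  have hFrep : ∀ ψ : ℝ → ℝ, IsTestFun1 ψ → ∃ h : ℝ → ℝ, Measurable h ∧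
      ∀ t, 0 ≤ t → ∫ x, ψ x ∂(μt t) = h t := by
    intro ψ hψ
    refine ⟨fun t => (∫ x, ψ x ∂ν) +
      ∫ s in Ioc (0:ℝ) t, (∫ x, L1op (fun y => -y + ε * Bmean (μt s)) ψ x ∂(μt s)),
      measurable_const.add (measurable_setIntegral_Ioc _), fun t ht => ?_⟩
    have h := hμtSol ψ hψ t ht
    rw [intervalIntegral.integral_of_le ht] at h
    simp only []
    linarith
  -- Step Z : all derivative integrals against muLim vanish
  have hZ : ∀ φ : ℝ → ℝ, IsTestFun1 φ → ∫ x, deriv φ x ∂muLim = 0 := by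
    intro φ hφ
    by_contra hc
    have hψ2 : IsTestFun1 (deriv φ) := testFun_deriv hφ
    set ψ1 : ℝ → ℝ := fun x => deriv (deriv φ) x - x * deriv φ x with hψ1def
    have hψ1 : IsTestFun1 ψ1 := testFun_psi1 hφ
    obtain ⟨C0, hC0pos, hC0⟩ := testFun_bound hφ.1.continuous hφ.2
    obtain ⟨C1, hC1pos, hC1⟩ := testFun_bound hψ1.1.continuous hψ1.2
    obtain ⟨C2, hC2pos, hC2⟩ := testFun_bound hψ2.1.continuous hψ2.2
    obtain ⟨h1, h1m, h1e⟩ := hFrep ψ1 hψ1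
    obtain ⟨h2, h2m, h2e⟩ := hFrep (deriv φ) hψ2
    set G : ℝ → ℝ := fun s => ∫ x, L1op (fun y => -y + ε * Bmean (μt s)) φ x ∂(μt s)
      with hGdef
    have hint1 : ∀ s, 0 ≤ s → Integrable ψ1 (μt s) := fun s hs => by
      haveI := hμtProb s hs
      exact hψ1.1.continuous.integrable_of_hasCompactSupport hψ1.2
    have hint2 : ∀ s, 0 ≤ s → Integrable (deriv φ) (μt s) := fun s hs => by
      haveI := hμtProb s hs
      exact hψ2.1.continuous.integrable_of_hasCompactSupport hψ2.2
    -- decomposition of G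
    have hGdec : ∀ s, 0 ≤ s → G s = (∫ x, ψ1 x ∂(μt s))
        + ε * (Bmean ν * Real.exp ((ε - 1) * s)) * (∫ x, deriv φ x ∂(μt s)) := by
      intro s hs
      have hb : Bmean (μt s) = Bmean ν * Real.exp ((ε - 1) * s) := hBexp s hs
      have hptw : ∀ x, L1op (fun y => -y + ε * Bmean (μt s)) φ x
          = ψ1 x + (ε * (Bmean ν * Real.exp ((ε - 1) * s))) * deriv φ x := by
        intro x; simp only [L1op, hb, hψ1def]; ring
      calc G s = ∫ x, (ψ1 x + (ε * (Bmean ν * Real.exp ((ε - 1) * s))) * deriv φ x) ∂(μt s) := by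
            rw [hGdef]; exact integral_congr_ae (Eventually.of_forall hptw)
        _ = (∫ x, ψ1 x ∂(μt s))
            + ε * (Bmean ν * Real.exp ((ε - 1) * s)) * (∫ x, deriv φ x ∂(μt s)) := by
            rw [integral_add (hint1 s hs) ((hint2 s hs).const_mul _), integral_const_mul]
    -- uniform bounds on the means
    have hmean_bd : ∀ (ψ : ℝ → ℝ) (C : ℝ), (∀ x, ‖ψ x‖ ≤ C) → ∀ s, 0 ≤ s →
        |∫ x, ψ x ∂(μt s)| ≤ C := by
      intro ψ C hC s hs
      haveI := hμtProb s hs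
      have := norm_integral_le_of_norm_le_const (μ := μt s) (f := ψ) (C := C)
        (Eventually.of_forall hC)
      simpa [Real.norm_eq_abs] using this
    -- integrability of G on [0,T]
    have hGint : ∀ T, 0 ≤ T → IntegrableOn G (Ioc (0:ℝ) T) volume := by
      intro T hT
      have hg : Measurable fun s => h1 s + ε * (Bmean ν * Real.exp ((ε - 1) * s)) * h2 s := by
        fun_prop
      have heqset : ∀ s ∈ Ioc (0:ℝ) T, G s
          = h1 s + ε * (Bmean ν * Real.exp ((ε - 1) * s)) * h2 s := by
        intro s hs
        rw [hGdec s hs.1.le, h1e s hs.1.le, h2e s hs.1.le]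
      refine Integrable.mono'
        (g := fun s => C1 + ε * (|Bmean ν| * Real.exp ((ε - 1) * s)) * C2) ?_ ?_ ?_
      · apply Continuous.integrableOn_Ioc
        fun_prop
      · exact hg.aestronglyMeasurable.congr
          ((ae_restrict_iff' measurableSet_Ioc).2
            (ae_of_all _ fun s hs => (heqset s hs).symm))
      · rw [ae_restrict_iff' measurableSet_Ioc]
        refine ae_of_all _ fun s hs => ?_
        have e1 := hmean_bd ψ1 C1 hC1 s hs.1.le
        have e2 := hmean_bd (deriv φ) C2 hC2 s hs.1.le
        rw [Real.norm_eq_abs, hGdec s hs.1.le]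
        have hexp := Real.exp_pos ((ε - 1) * s)
        calc |(∫ x, ψ1 x ∂(μt s))
              + ε * (Bmean ν * Real.exp ((ε - 1) * s)) * (∫ x, deriv φ x ∂(μt s))|
            ≤ |∫ x, ψ1 x ∂(μt s)|
              + |ε * (Bmean ν * Real.exp ((ε - 1) * s)) * (∫ x, deriv φ x ∂(μt s))| :=
                abs_add_le _ _
          _ ≤ C1 + ε * (|Bmean ν| * Real.exp ((ε - 1) * s)) * C2 := by
              have : |ε * (Bmean ν * Real.exp ((ε - 1) * s)) * (∫ x, deriv φ x ∂(μt s))|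
                  = ε * (|Bmean ν| * Real.exp ((ε - 1) * s)) * |∫ x, deriv φ x ∂(μt s)| := by
                rw [abs_mul, abs_mul, abs_mul, abs_of_pos hεpos, abs_of_pos hexp]
              rw [this]
              have hnn : 0 ≤ ε * (|Bmean ν| * Real.exp ((ε - 1) * s)) := by positivity
              nlinarith [abs_nonneg (∫ x, deriv φ x ∂(μt s))]
    have hGII : ∀ a b : ℝ, 0 ≤ a → a ≤ b → IntervalIntegrable G volume a b := by
      intro a b ha hab
      rw [intervalIntegrable_iff_integrableOn_Ioc_of_le hab]
      exact (hGint b (ha.trans hab)).mono_set (Ioc_subset_Ioc ha le_rfl)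
    -- solution identity in terms of G
    have hSol' : ∀ t, 0 ≤ t →
        (∫ x, φ x ∂(μt t)) - (∫ x, φ x ∂ν) = ∫ s in (0:ℝ)..t, G s := fun t ht =>
      hμtSol φ hφ t ht
    -- difference identity
    have hdiff : ∀ T t : ℝ, 0 ≤ T → T ≤ t →
        (∫ x, φ x ∂(μt t)) - (∫ x, φ x ∂(μt T)) = ∫ s in T..t, G s := by
      intro T t hT hTt
      have e1 := hSol' t (hT.trans hTt)
      have e2 := hSol' T hT
      have e3 := intervalIntegral.integral_add_adjacent_intervals
        (hGII 0 T le_rfl hT) (hGII T t hT hTt)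
      linarith
    -- convergence of the derivative means
    set c : ℝ := ∫ x, deriv φ x ∂muLim with hcdef
    have hcs : Tendsto (fun t => ∫ x, deriv φ x ∂(μt t)) atTop (nhds c) := by
      have := hconv (BoundedContinuousFunction.ofNormedAddCommGroup
        (deriv φ) hψ2.1.continuous C2 hC2)
      simpa [BoundedContinuousFunction.coe_ofNormedAddCommGroup] using this
    set κ : ℝ := ε * Bmean ν * c with hκdef
    have hκ : κ ≠ 0 := mul_ne_zero (mul_ne_zero (ne_of_gt hεpos) hBν) hc
    have hκpos : 0 < |κ| := abs_pos.mpr hκ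
    set σ : ℝ := if 0 < κ then 1 else -1 with hσdef
    have hσκ : σ * κ = |κ| := by
      rw [hσdef]
      rcases lt_trichotomy 0 κ with h | h | h
      · rw [if_pos h, abs_of_pos h]; ring
      · exact absurd h.symm hκ
      · rw [if_neg (by linarith), abs_of_neg h]; ring
    have hσabs : |σ| = 1 := by
      rw [hσdef]; split <;> simp
    have htend2 : Tendsto (fun t => σ * (ε * Bmean ν * (∫ x, deriv φ x ∂(μt t))))
        atTop (nhds (|κ|)) := by
      rw [← hσκ]
      exact (hcs.const_mul (ε * Bmean ν)).const_mul σ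
    have hev1 : ∀ᶠ t in atTop,
        |κ|/2 ≤ σ * (ε * Bmean ν * (∫ x, deriv φ x ∂(μt t))) :=
      htend2.eventually (eventually_ge_nhds (by linarith))
    have hev2 : ∀ᶠ s in atTop, 2*(C1+1)/|κ| ≤ Real.exp ((ε - 1) * s) := by
      have h := Real.tendsto_exp_atTop.comp
        (Tendsto.const_mul_atTop (by linarith : (0:ℝ) < ε - 1) tendsto_id)
      exact h.eventually_ge_atTop _
    obtain ⟨T, hT⟩ := eventually_atTop.mp
      ((hev1.and hev2).and (eventually_ge_atTop (0:ℝ)))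
    have hT0 : 0 ≤ T := (hT T le_rfl).2
    -- pointwise lower bound on σ * G
    have hGlb : ∀ s, T ≤ s → 1 ≤ σ * G s := by
      intro s hs
      obtain ⟨⟨l1, l2⟩, l3⟩ := hT s hs
      have e : σ * G s = σ * (∫ x, ψ1 x ∂(μt s))
          + (σ * (ε * Bmean ν * (∫ x, deriv φ x ∂(μt s)))) * Real.exp ((ε - 1) * s) := by
        rw [hGdec s l3]; ring
      have b1 : -C1 ≤ σ * (∫ x, ψ1 x ∂(μt s)) := by
        have := hmean_bd ψ1 C1 hC1 s l3
        have h1' : |σ * (∫ x, ψ1 x ∂(μt s))| ≤ C1 := by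
          rw [abs_mul, hσabs, one_mul]; exact this
        linarith [neg_abs_le (σ * (∫ x, ψ1 x ∂(μt s)))]
      have b2 : (|κ|/2) * (2*(C1+1)/|κ|)
          ≤ (σ * (ε * Bmean ν * (∫ x, deriv φ x ∂(μt s)))) * Real.exp ((ε - 1) * s) := by
        apply mul_le_mul l1 l2 (by positivity) (le_trans (by positivity) l1)
      have hid : (|κ|/2) * (2*(C1+1)/|κ|) = C1 + 1 := by
        field_simp
      rw [e]
      rw [hid] at b2
      linarith
    -- conclude contradiction
    set t1 : ℝ := T + 2*C0 + 2 with ht1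
    have hTt : T ≤ t1 := by linarith
    have hii : IntervalIntegrable G volume T t1 := hGII T t1 hT0 hTt
    have hmono : ∫ s in T..t1, (1:ℝ) ≤ ∫ s in T..t1, σ * G s := by
      apply intervalIntegral.integral_mono_on hTt intervalIntegrable_const (hii.const_mul σ)
      exact fun s hs => hGlb s hs.1
    rw [intervalIntegral.integral_const_mul] at hmono
    simp only [intervalIntegral.integral_const, smul_eq_mul, mul_one] at hmono
    have hd := hdiff T t1 hT0 hTt
    have hb1 : |∫ x, φ x ∂(μt t1)| ≤ C0 := hmean_bd φ C0 hC0 t1 (by linarith)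
    have hb2 : |∫ x, φ x ∂(μt T)| ≤ C0 := hmean_bd φ C0 hC0 T hT0
    have hσd : σ * ((∫ x, φ x ∂(μt t1)) - (∫ x, φ x ∂(μt T))) ≤ 2*C0 := by
      have : |σ * ((∫ x, φ x ∂(μt t1)) - (∫ x, φ x ∂(μt T)))| ≤ 2*C0 := by
        rw [abs_mul, hσabs, one_mul]
        calc |(∫ x, φ x ∂(μt t1)) - (∫ x, φ x ∂(μt T))|
            ≤ |∫ x, φ x ∂(μt t1)| + |∫ x, φ x ∂(μt T)| := abs_sub _ _
          _ ≤ 2*C0 := by linarith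
      linarith [le_abs_self (σ * ((∫ x, φ x ∂(μt t1)) - (∫ x, φ x ∂(μt T))))]
    rw [hd] at hσd
    linarith
  -- Final contradiction: build a bump function with positive integral
  have hU : (⋃ n : ℕ, Icc (-(n:ℝ)) n) = univ := by
    ext x
    simp only [mem_iUnion, mem_univ, iff_true, mem_Icc]
    obtain ⟨n, hn⟩ := exists_nat_ge |x|
    exact ⟨n, (abs_le.mp hn).1, (abs_le.mp hn).2⟩
  have hex : ∃ n : ℕ, 0 < muLim (Icc (-(n:ℝ)) n) := by
    by_contra h
    push_neg at h
    have h0 : muLim univ = 0 := by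
      rw [← hU]
      exact measure_iUnion_null fun n => le_antisymm (h n) zero_le
    simp [measure_univ] at h0
  obtain ⟨n, hn⟩ := hex
  set b : ContDiffBump (0:ℝ) := ⟨(n:ℝ)+1, (n:ℝ)+2, by positivity, by linarith⟩ with hbdef
  have hbc : Continuous (b : ℝ → ℝ) := b.continuous
  have hbt : IsTestFun1 (b : ℝ → ℝ) := ⟨b.contDiff, b.hasCompactSupport⟩
  have hbint : Integrable (b : ℝ → ℝ) muLim :=
    hbc.integrable_of_hasCompactSupport b.hasCompactSupport
  set K : ℝ := ∫ x, (b : ℝ → ℝ) x ∂muLim with hKdef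
  have hKpos : 0 < K := by
    have hind : ∫ x, (Icc (-(n:ℝ)) n).indicator (fun _ => (1:ℝ)) x ∂muLim
        = (muLim (Icc (-(n:ℝ)) n)).toReal := by
      rw [integral_indicator measurableSet_Icc]
      simp
      rfl
    have hmono : ∫ x, (Icc (-(n:ℝ)) n).indicator (fun _ => (1:ℝ)) x ∂muLim
        ≤ ∫ x, (b : ℝ → ℝ) x ∂muLim := by
      apply integral_mono ((integrable_const (1:ℝ)).indicator measurableSet_Icc) hbint
      intro x
      by_cases hx : x ∈ Icc (-(n:ℝ)) n
      · rw [indicator_of_mem hx]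
        have : x ∈ Metric.closedBall (0:ℝ) ((n:ℝ)+1) := by
          rw [Metric.mem_closedBall, Real.dist_eq, sub_zero]
          rw [mem_Icc] at hx
          rw [abs_le]
          constructor <;> linarith [hx.1, hx.2]
        rw [b.one_of_mem_closedBall this]
      · rw [indicator_of_notMem hx]
        exact b.nonneg' x
    have htr : 0 < (muLim (Icc (-(n:ℝ)) n)).toReal :=
      ENNReal.toReal_pos hn.ne' (measure_ne_top _ _)
    rw [hKdef]
    linarith [hind ▸ hmono]
  -- the translated integrals are constant in y
  have hder : ∀ y : ℝ, HasDerivAt (fun y => ∫ x, (b : ℝ → ℝ) (x - y) ∂muLim) 0 y := by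
    intro y
    have hdb : IsTestFun1 (deriv (b : ℝ → ℝ)) := testFun_deriv hbt
    obtain ⟨Cd, hCd0, hCd⟩ := testFun_bound hdb.1.continuous hdb.2
    have hcont_tr : ∀ y' : ℝ, Continuous fun x : ℝ => (b : ℝ → ℝ) (x - y') := fun y' =>
      hbc.comp (continuous_id.sub continuous_const)
    have key := hasDerivAt_integral_of_dominated_loc_of_deriv_le
      (F := fun (y : ℝ) (x : ℝ) => (b : ℝ → ℝ) (x - y))
      (F' := fun (y : ℝ) (x : ℝ) => -(deriv (b : ℝ → ℝ) (x - y)))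
      (x₀ := y) (bound := fun _ => Cd) (μ := muLim) (Metric.ball_mem_nhds y one_pos)
      (Eventually.of_forall fun y' => (hcont_tr y').aestronglyMeasurable)
      ((testFun_translate hbt y).1.continuous.integrable_of_hasCompactSupport
        (testFun_translate hbt y).2)
      (((hdb.1.continuous.comp (continuous_id.sub continuous_const)).neg).aestronglyMeasurable)
      (ae_of_all _ fun x y' _ => by
        rw [norm_neg]
        exact hCd (x - y'))
      (integrable_const Cd)
      (ae_of_all _ fun x y' _ => by
        have h1 : HasDerivAt (b : ℝ → ℝ) (deriv (b : ℝ → ℝ) (x - y')) (x - y') :=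
          ((hbt.1.differentiable (by simp)) (x - y')).hasDerivAt
        have h2 : HasDerivAt (fun y : ℝ => x - y) (-1) y' := by
          simpa using (hasDerivAt_id y').const_sub x
        have := h1.comp y' h2
        simpa [Function.comp_def] using this)
    obtain ⟨-, hD⟩ := key
    have h0 : ∫ x, -(deriv (b : ℝ → ℝ) (x - y)) ∂muLim = 0 := by
      rw [integral_neg, neg_eq_zero]
      have hz := hZ (fun x => (b : ℝ → ℝ) (x - y)) (testFun_translate hbt y)
      have heq : (fun x : ℝ => deriv (fun x' : ℝ => (b : ℝ → ℝ) (x' - y)) x)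
          = fun x : ℝ => deriv (b : ℝ → ℝ) (x - y) := by
        funext x
        exact deriv_comp_sub_const (b : ℝ → ℝ) y x
      rw [← heq]
      exact hz
    rw [h0] at hD
    exact hD
  have hconst : ∀ y : ℝ, ∫ x, (b : ℝ → ℝ) (x - y) ∂muLim = K := by
    intro y
    have hdiffble : Differentiable ℝ (fun y => ∫ x, (b : ℝ → ℝ) (x - y) ∂muLim) :=
      fun y => (hder y).differentiableAt
    have := is_const_of_deriv_eq_zero hdiffble (fun y => (hder y).deriv) y 0
    simpa [hKdef] using this
  -- but the translated integrals tend to 0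
  have hIci : ∀ y : ℝ, K ≤ (muLim (Ici (y - ((n:ℝ)+2)))).toReal := by
    intro y
    rw [← hconst y]
    have hint : Integrable (fun x => (b : ℝ → ℝ) (x - y)) muLim :=
      (testFun_translate hbt y).1.continuous.integrable_of_hasCompactSupport
        (testFun_translate hbt y).2
    have hmono : ∫ x, (b : ℝ → ℝ) (x - y) ∂muLim
        ≤ ∫ x, (Ici (y - ((n:ℝ)+2))).indicator (fun _ => (1:ℝ)) x ∂muLim := by
      apply integral_mono hint ((integrable_const (1:ℝ)).indicator measurableSet_Ici)
      intro x
      by_cases hx : x ∈ Ici (y - ((n:ℝ)+2))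
      · rw [indicator_of_mem hx]
        exact b.le_one
      · rw [indicator_of_notMem hx]
        show (b : ℝ → ℝ) (x - y) ≤ 0
        have hd : ((n:ℝ)+2) ≤ dist (x - y) 0 := by
          rw [Real.dist_eq, sub_zero]
          rw [mem_Ici, not_le] at hx
          rw [abs_sub_comm]
          calc ((n:ℝ)+2) ≤ y - x := by linarith
            _ ≤ |y - x| := le_abs_self _
        exact le_of_eq (b.zero_of_le_dist hd)
    have hind : ∫ x, (Ici (y - ((n:ℝ)+2))).indicator (fun _ => (1:ℝ)) x ∂muLim
        = (muLim (Ici (y - ((n:ℝ)+2)))).toReal := by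
      rw [integral_indicator measurableSet_Ici]
      simp
      rfl
    linarith [hind ▸ hmono]
  have htm : Tendsto (fun k : ℕ => muLim (Ici ((k:ℝ) - ((n:ℝ)+2)))) atTop (nhds 0) := by
    have hanti : Antitone fun k : ℕ => Ici ((k:ℝ) - ((n:ℝ)+2)) := by
      intro i j hij
      apply Ici_subset_Ici.mpr
      have : (i:ℝ) ≤ (j:ℝ) := Nat.cast_le.mpr hij
      linarith
    have h := tendsto_measure_iInter_atTop (μ := muLim)
      (s := fun k : ℕ => Ici ((k:ℝ) - ((n:ℝ)+2)))
      (fun k => measurableSet_Ici.nullMeasurableSet) hanti ⟨0, measure_ne_top _ _⟩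
    have hempty : (⋂ k : ℕ, Ici ((k:ℝ) - ((n:ℝ)+2))) = ∅ := by
      ext x
      simp only [mem_iInter, mem_Ici, mem_empty_iff_false, iff_false, not_forall, not_le]
      obtain ⟨k, hk⟩ := exists_nat_gt (x + ((n:ℝ)+2))
      exact ⟨k, by linarith⟩
    rw [hempty, measure_empty] at h
    exact h
  have htr : Tendsto (fun k : ℕ => (muLim (Ici ((k:ℝ) - ((n:ℝ)+2)))).toReal)
      atTop (nhds 0) := by
    have := (ENNReal.tendsto_toReal (by simp : (0:ℝ≥0∞) ≠ ⊤)).comp htm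
    simpa [Function.comp_def] using this
  have hK0 : K ≤ 0 := ge_of_tendsto htr (Eventually.of_forall fun k => hIci (k:ℝ))
  linarith
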